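/- Let P be a finite poset of order n with a maximum chain of size |C|. Then n - |C| ≤ (ln 2) · n · H(\bar P), where H(\bar P) is the entropy of the incomparability graph of P. -/

import Mathlib

open Finset

variable {V : Type*} [Fintype V] [DecidableEq V]

/-- The incomparability graph of a poset. -/
def incompGraph (V : Type*) [PartialOrder V] : SimpleGraph V where
  Adj x y := x ≠ y ∧ ¬ x ≤ y ∧ ¬ y ≤ x
  symm := ⟨by rintro x y ⟨hne, h1, h2⟩; exact ⟨hne.symm, h2, h1⟩⟩
  loopless := ⟨by rintro x ⟨hne, -, -⟩; exact hne rfl⟩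

/-- The stable set polytope of a graph. -/
def STAB (G : SimpleGraph V) : Set (V → ℝ) :=
  convexHull ℝ {χ : V → ℝ | ∃ S : Finset V,
    (∀ u ∈ S, ∀ v ∈ S, ¬ G.Adj u v) ∧ χ = fun v => if v ∈ S then (1 : ℝ) else 0}

/-- The entropy of a graph: the infimum of `-(1/n) ∑ log₂ x_v` over `x ∈ STAB(G)`
with positive coordinates. -/
noncomputable def graphEntropy (G : SimpleGraph V) : ℝ :=
  sInf {h : ℝ | ∃ x ∈ STAB G, (∀ v, 0 < x v) ∧
    h = -(1 / (Fintype.card V : ℝ)) * ∑ v, Real.logb 2 (x v)}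

/-- For a finite poset `P` of order `n` with maximum chain `C`,
`n - |C| ≤ (ln 2) · n · H(P̄)`. -/
theorem card_sub_max_chain_le [PartialOrder V] (C : Finset V)
    (hC : IsChain (· ≤ ·) (C : Set V))
    (hmax : ∀ D : Finset V, IsChain (· ≤ ·) (D : Set V) → D.card ≤ C.card) :
    (Fintype.card V : ℝ) - (C.card : ℝ) ≤
      Real.log 2 * (Fintype.card V : ℝ) * graphEntropy (incompGraph V) := by
  classical
  set n : ℝ := (Fintype.card V : ℝ) with hn
  -- every point of STAB has coordinate sum at most |C|
  have hstab : ∀ x ∈ STAB (incompGraph V), ∑ v, x v ≤ (C.card : ℝ) := by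
    intro x hx
    have hlin : IsLinearMap ℝ (fun y : V → ℝ => ∑ v, y v) := by
      constructor
      · intro a b; simp [Finset.sum_add_distrib]
      · intro c a; simp [Finset.mul_sum]
    have hconv : Convex ℝ {y : V → ℝ | ∑ v, y v ≤ (C.card : ℝ)} :=
      convex_halfSpace_le hlin _
    refine convexHull_min ?_ hconv hx
    rintro χ ⟨S, hS, rfl⟩
    have hchain : IsChain (· ≤ ·) (S : Set V) := by
      intro u hu v hv huv
      have h := hS u hu v hv
      simp only [incompGraph, not_and, not_not] at h
      by_contra hcon
      push_neg at hcon
      exact hcon.2 (h huv hcon.1)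
    have hcard : S.card ≤ C.card := hmax S hchain
    have : (∑ v, if v ∈ S then (1 : ℝ) else 0) = (S.card : ℝ) := by
      simp [Finset.sum_ite_mem]
    simp only [Set.mem_setOf_eq, this]
    exact_mod_cast hcard
  rcases Nat.eq_zero_or_pos (Fintype.card V) with h0 | hpos
  · have hc : C.card = 0 := Nat.le_antisymm (h0 ▸ C.card_le_univ) (Nat.zero_le _)
    simp [hn, h0, hc]
  have hnpos : (0 : ℝ) < n := hn ▸ Nat.cast_pos.mpr hpos
  have hlog2 : (0 : ℝ) < Real.log 2 := Real.log_pos (by norm_num)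
  have hd : (0 : ℝ) < Real.log 2 * n := mul_pos hlog2 hnpos
  -- lower bound every element of the entropy set
  have hbound : ∀ h ∈ {h : ℝ | ∃ x ∈ STAB (incompGraph V), (∀ v, 0 < x v) ∧
      h = -(1 / n) * ∑ v, Real.logb 2 (x v)},
      (n - (C.card : ℝ)) / (Real.log 2 * n) ≤ h := by
    rintro h ⟨x, hx, hxpos, rfl⟩
    have key : n - (C.card : ℝ) ≤ -∑ v, Real.log (x v) := by
      have h1 : ∀ v : V, (1 : ℝ) - x v ≤ -Real.log (x v) := by
        intro v
        have := Real.log_le_sub_one_of_pos (hxpos v)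
        linarith
      have h2 : ∑ v, ((1 : ℝ) - x v) ≤ ∑ v, -Real.log (x v) :=
        Finset.sum_le_sum fun v _ => h1 v
      have h3 : ∑ v, ((1 : ℝ) - x v) = n - ∑ v, x v := by
        simp [Finset.sum_sub_distrib, hn]
      have h4 := hstab x hx
      rw [h3] at h2
      rw [Finset.sum_neg_distrib] at h2
      linarith
    rw [div_le_iff₀ hd]
    have heq : -(1 / n) * (∑ v, Real.logb 2 (x v)) * (Real.log 2 * n)
        = -∑ v, Real.log (x v) := by
      have hsum : ∑ v, Real.logb 2 (x v) = (∑ v, Real.log (x v)) / Real.log 2 := by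
        rw [Finset.sum_div]
        exact Finset.sum_congr rfl fun v _ => by rw [Real.logb, Real.log]
      rw [hsum]
      have hn0 : n ≠ 0 := hnpos.ne'
      have hl0 : Real.log 2 ≠ 0 := hlog2.ne'
      field_simp
    rw [heq]
    exact key
  -- the entropy set is nonempty: the uniform point 1/n is in STAB
  have hne : ∃ h : ℝ, h ∈ {h : ℝ | ∃ x ∈ STAB (incompGraph V), (∀ v, 0 < x v) ∧
      h = -(1 / n) * ∑ v, Real.logb 2 (x v)} := by
    refine ⟨_, (fun _ : V => n⁻¹), ?_, fun v => by positivity, rfl⟩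
    have hmem : ∀ u : V, (fun v => if v ∈ ({u} : Finset V) then (1 : ℝ) else 0) ∈
        {χ : V → ℝ | ∃ S : Finset V,
          (∀ a ∈ S, ∀ b ∈ S, ¬ (incompGraph V).Adj a b) ∧
          χ = fun v => if v ∈ S then (1 : ℝ) else 0} := by
      intro u
      refine ⟨{u}, ?_, rfl⟩
      intro a ha b hb
      simp only [Finset.mem_singleton] at ha hb
      subst ha; subst hb
      exact (incompGraph V).loopless.irrefl b
    have := Finset.centerMass_mem_convexHull (t := (Finset.univ : Finset V))
      (w := fun _ => (1 : ℝ))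
      (z := fun u => (fun v => if v ∈ ({u} : Finset V) then (1 : ℝ) else 0))
      (fun _ _ => zero_le_one) (by simpa [hn] using hnpos)
      (fun u _ => hmem u)
    have hcm : (Finset.univ : Finset V).centerMass (fun _ => (1 : ℝ))
        (fun u => (fun v => if v ∈ ({u} : Finset V) then (1 : ℝ) else 0))
        = fun _ : V => n⁻¹ := by
      funext v
      simp [Finset.centerMass, hn, Finset.sum_apply, Finset.sum_ite_eq,
        eq_comm]
    rw [hcm] at this
    exact this
  have hsinf : (n - (C.card : ℝ)) / (Real.log 2 * n) ≤ graphEntropy (incompGraph V) := by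
    unfold graphEntropy
    exact le_csInf hne hbound
  calc n - (C.card : ℝ)
      = (n - (C.card : ℝ)) / (Real.log 2 * n) * (Real.log 2 * n) := by
        field_simp
    _ ≤ graphEntropy (incompGraph V) * (Real.log 2 * n) := by
        exact mul_le_mul_of_nonneg_right hsinf hd.le
    _ = Real.log 2 * n * graphEntropy (incompGraph V) := by ring
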